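/- Let m ≥ 2 be an integer and ζ ∈ [0,1). For each k ≥ 1 let p_{1,k},…,p_{m−1,k} be real numbers with Σ_{j=1}^{m−1} |p_{j,k}| ≤ ζ, and set P_k = P(p_{1,k},…,p_{m−1,k}). Then for every integer a ≥ 0, the product of any m−1 consecutive such matrices satisfies ‖P_{a+m−1} P_{a+m−2} ⋯ P_{a+1}‖_∞ ≤ ζ. -/

import Mathlib

/-- The `(m−1)×(m−1)` companion-type matrix whose first row is `p` and whose
`(j+1, j)` entries are `1`, all other entries being `0`. -/
def PMat {d : ℕ} (p : Fin d → ℝ) : Matrix (Fin d) (Fin d) ℝ :=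
  fun i j => if (i : ℕ) = 0 then p j else if (i : ℕ) = (j : ℕ) + 1 then 1 else 0

/-- The maximum absolute row sum norm `‖·‖_∞` of a square real matrix. -/
noncomputable def rowSumNorm {d : ℕ} [NeZero d] (A : Matrix (Fin d) (Fin d) ℝ) : ℝ :=
  Finset.univ.sup'
    (Finset.univ_nonempty_iff.mpr ⟨⟨0, Nat.pos_of_ne_zero (NeZero.ne d)⟩⟩)
    fun i => ∑ j, |A i j|

lemma rowsum_mul {d : ℕ} (A B : Matrix (Fin d) (Fin d) ℝ) (i : Fin d) :
    ∑ j, |(A * B) i j| ≤ ∑ l, |A i l| * ∑ j, |B l j| := by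
  calc ∑ j, |(A * B) i j| ≤ ∑ j, ∑ l, |A i l * B l j| := by
        refine Finset.sum_le_sum fun j _ => ?_
        simpa [Matrix.mul_apply] using Finset.abs_sum_le_sum_abs (fun l => A i l * B l j) _
    _ = ∑ l, |A i l| * ∑ j, |B l j| := by
        rw [Finset.sum_comm]
        simp [abs_mul, Finset.mul_sum]

lemma PMat_row_pos {d : ℕ} (q : Fin d → ℝ) (i : Fin d) (hi : (i : ℕ) ≠ 0)
    (r : Fin d → ℝ) :
    ∑ l, |PMat q i l| * r l = r ⟨(i : ℕ) - 1, by omega⟩ := by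
  rw [Finset.sum_eq_single (⟨(i : ℕ) - 1, by omega⟩ : Fin d)]
  · simp [PMat, hi]
    rw [if_pos (by omega)]
    simp
  · intro b _ hb
    have hne : (i : ℕ) ≠ (b : ℕ) + 1 := by
      intro h; apply hb; apply Fin.ext; simp; omega
    simp [PMat, hi, hne]
  · simp

lemma prod_rowsum_le_one {d : ℕ} (ζ : ℝ) (hζ1 : ζ ≤ 1)
    (L : List (Matrix (Fin d) (Fin d) ℝ))
    (hL : ∀ A ∈ L, ∃ q : Fin d → ℝ, A = PMat q ∧ ∑ j, |q j| ≤ ζ) (i : Fin d) :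
    ∑ j, |L.prod i j| ≤ 1 := by
  induction L generalizing i with
  | nil => simp [Matrix.one_apply, apply_ite abs, Finset.sum_ite_eq]
  | cons A L ih =>
    obtain ⟨q, rfl, hq⟩ := hL A List.mem_cons_self
    rw [List.prod_cons]
    refine (rowsum_mul _ _ i).trans ?_
    have hL' : ∀ B ∈ L, ∃ q : Fin d → ℝ, B = PMat q ∧ ∑ j, |q j| ≤ ζ :=
      fun B hB => hL B (List.mem_cons_of_mem _ hB)
    by_cases h0 : (i : ℕ) = 0
    · calc ∑ l, |PMat q i l| * ∑ j, |L.prod l j|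
          ≤ ∑ l, |q l| * 1 := by
            refine Finset.sum_le_sum fun l _ => ?_
            simp only [PMat, h0, if_pos]
            exact mul_le_mul_of_nonneg_left (ih hL' l) (abs_nonneg _)
        _ ≤ 1 := by simpa using hq.trans hζ1
    · rw [PMat_row_pos q i h0]
      exact ih hL' ⟨(i : ℕ) - 1, by omega⟩

lemma prod_rowsum_le_zeta {d : ℕ} (ζ : ℝ) (hζ0 : 0 ≤ ζ) (hζ1 : ζ ≤ 1)
    (L : List (Matrix (Fin d) (Fin d) ℝ))
    (hL : ∀ A ∈ L, ∃ q : Fin d → ℝ, A = PMat q ∧ ∑ j, |q j| ≤ ζ) (i : Fin d)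
    (hi : (i : ℕ) < L.length) :
    ∑ j, |L.prod i j| ≤ ζ := by
  induction L generalizing i with
  | nil => simp at hi
  | cons A L ih =>
    obtain ⟨q, rfl, hq⟩ := hL A List.mem_cons_self
    rw [List.prod_cons]
    refine (rowsum_mul _ _ i).trans ?_
    have hL' : ∀ B ∈ L, ∃ q : Fin d → ℝ, B = PMat q ∧ ∑ j, |q j| ≤ ζ :=
      fun B hB => hL B (List.mem_cons_of_mem _ hB)
    by_cases h0 : (i : ℕ) = 0
    · calc ∑ l, |PMat q i l| * ∑ j, |L.prod l j|
          ≤ ∑ l, |q l| * 1 := by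
            refine Finset.sum_le_sum fun l _ => ?_
            simp only [PMat, h0, if_pos]
            exact mul_le_mul_of_nonneg_left (prod_rowsum_le_one ζ hζ1 L hL' l) (abs_nonneg _)
        _ ≤ ζ := by simpa using hq
    · rw [PMat_row_pos q i h0]
      exact ih hL' _ (by simp at hi ⊢; omega)

/-- Lemma 5 of the paper: the product of `m−1` consecutive companion-type matrices
with row sums at most `ζ < 1` has maximum row sum norm at most `ζ`. -/
theorem stmt10 (m : ℕ) (hm : 2 ≤ m) (ζ : ℝ) (hζ0 : 0 ≤ ζ) (hζ1 : ζ < 1)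
    (p : ℕ → Fin (m - 1) → ℝ)
    (hp : ∀ k, 1 ≤ k → ∑ j, |p k j| ≤ ζ) :
    ∀ a : ℕ,
      @rowSumNorm (m - 1) ⟨by omega⟩
          (((List.range (m - 1)).map fun j => PMat (p (a + m - 1 - j))).prod) ≤ ζ := by
  intro a
  have : NeZero (m - 1) := ⟨by omega⟩
  apply Finset.sup'_le
  intro i _
  apply prod_rowsum_le_zeta ζ hζ0 hζ1.le
  · intro A hA
    simp only [List.mem_map, List.mem_range] at hA
    obtain ⟨j, hj, rfl⟩ := hA
    exact ⟨_, rfl, hp _ (by omega)⟩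
  · simpa using i.isLt
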